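/- Fix θ ∈ Θ and suppose there exists a (sub-)probability measure P′ in the effective null hypothesis with D_KL(P_θ ∥ P′) < ∞ and P′ absolutely continuous with respect to P_θ and dominating P_θ. Then for every e-variable E for the null, the expectation E_θ[log E] is well-defined and satisfies −∞ ≤ E_θ[log E] ≤ D_KL(P_θ ∥ P′) < ∞. -/

import Mathlib

open MeasureTheory ENNReal Filter Set
open scoped Classical
noncomputable section

/-- The positive part of an extended real, as an extended nonnegative real. -/
def erealPos (a : EReal) : ℝ≥0∞ := if a = ⊤ then ⊤ else ENNReal.ofReal a.toReal

/-- Generalized expectation `E[f] = E[f⁺] - E[f⁻]`, valued in the extended reals. -/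
def eexp {Ω : Type*} {mΩ : MeasurableSpace Ω} (μ : Measure Ω) (f : Ω → EReal) : EReal :=
  ((∫⁻ ω, erealPos (f ω) ∂μ : ℝ≥0∞) : EReal) - ((∫⁻ ω, erealPos (-(f ω)) ∂μ : ℝ≥0∞) : EReal)

/-- The expectation of an extended-real random variable is (well-)defined when at least one of
the expectations of its positive and negative parts is finite. -/
def ExpDefined {Ω : Type*} {mΩ : MeasurableSpace Ω} (μ : Measure Ω) (f : Ω → EReal) : Prop :=
  (∫⁻ ω, erealPos (f ω) ∂μ) < ⊤ ∨ (∫⁻ ω, erealPos (-(f ω)) ∂μ) < ⊤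

/-- Logarithm on `[0,∞]`, with `log 0 = -∞` and `log ∞ = ∞`. -/
def elog (x : ℝ≥0∞) : EReal := if x = 0 then ⊥ else if x = ⊤ then ⊤ else ((Real.log x.toReal : ℝ) : EReal)

/-- Ratio on `[0,∞]` with the conventions `0/0 = 0` and `∞/∞ = 1`. -/
def eratio (a b : ℝ≥0∞) : ℝ≥0∞ := if a = ⊤ ∧ b = ⊤ then 1 else a / b

/-- `g` is a version of the conditional expectation of the nonnegative `h` given the
sub-σ-field `m`, under the measure `μ`. -/
def IsCondExpNN {Ω : Type*} {mΩ : MeasurableSpace Ω} (m : MeasurableSpace Ω)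
    (μ : @Measure Ω mΩ) (h g : Ω → ℝ≥0∞) : Prop :=
  Measurable[m] g ∧ ∀ A : Set Ω, MeasurableSet[m] A → ∫⁻ ω in A, g ω ∂μ = ∫⁻ ω in A, h ω ∂μ

/-- `g` is a universal (θ-free) version of the conditional expectation of `h` given `m`,
simultaneously under all measures `P θ`, `θ` ranging over a set `T` of parameters. -/
def IsUnivCondExpNN {Ω Θ : Type*} {mΩ : MeasurableSpace Ω} (m : MeasurableSpace Ω)
    (P : Θ → @Measure Ω mΩ) (T : Set Θ) (h g : Ω → ℝ≥0∞) : Prop :=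
  Measurable[m] g ∧ ∀ θ ∈ T, IsCondExpNN m (P θ) h g

/-- A sub-σ-field `m` is sufficient for the family `P` over the parameter set `T`:
every nonnegative measurable function admits a universal conditional expectation given `m`. -/
def IsSufficient {Ω Θ : Type*} {mΩ : MeasurableSpace Ω} (m : MeasurableSpace Ω)
    (P : Θ → @Measure Ω mΩ) (T : Set Θ) : Prop :=
  m ≤ mΩ ∧ ∀ h : Ω → ℝ≥0∞, Measurable[mΩ] h → ∃ g, IsUnivCondExpNN m P T h g

/-- Kullback–Leibler divergence, valued in `[0,∞]` (as an extended real):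
`∫ log(dμ/dν) dμ` when `μ ≪ ν`, and `+∞` otherwise. -/
def klDiv' {Ω : Type*} {mΩ : MeasurableSpace Ω} (μ ν : Measure Ω) : EReal :=
  if μ ≪ ν then eexp μ (fun ω => elog (μ.rnDeriv ν ω)) else ⊤

/-- `F : [0,∞] → [-∞,∞]` is the extension by limits of a concave utility `f : (0,∞) → ℝ`,
i.e. `F 0 = lim_{x↓0} f x`, `F ∞ = lim_{x→∞} f x`, and `F = f` in between. -/
def IsConcaveExtension (f : ℝ → ℝ) (F : ℝ≥0∞ → EReal) : Prop :=
  ConcaveOn ℝ (Set.Ioi 0) f ∧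
  (∀ x : ℝ≥0∞, x ≠ 0 → x ≠ ⊤ → F x = ((f x.toReal : ℝ) : EReal)) ∧
  Tendsto (fun x : ℝ => ((f x : ℝ) : EReal)) (nhdsWithin 0 (Set.Ioi 0)) (nhds (F 0)) ∧
  Tendsto (fun x : ℝ => ((f x : ℝ) : EReal)) atTop (nhds (F ⊤))

section RaoBlackwellAux

lemma erealPos_coe (x : ℝ) : erealPos (x : EReal) = ENNReal.ofReal x := by
  simp [erealPos]

lemma measurable_erealPos : Measurable erealPos := by
  unfold erealPos
  refine Measurable.ite ?_ measurable_const
    (ENNReal.measurable_ofReal.comp measurable_ereal_toReal)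
  simpa [Set.setOf_eq_eq_singleton] using measurableSet_singleton (⊤ : EReal)

lemma measurable_elog : Measurable elog := by
  unfold elog
  refine Measurable.ite ?_ measurable_const (Measurable.ite ?_ measurable_const ?_)
  · simpa [Set.setOf_eq_eq_singleton] using measurableSet_singleton (0 : ℝ≥0∞)
  · simpa [Set.setOf_eq_eq_singleton] using measurableSet_singleton (⊤ : ℝ≥0∞)
  · exact measurable_coe_real_ereal.comp (Real.measurable_log.comp ENNReal.measurable_toReal)

lemma ennreal_coe_ereal_eq (X : ℝ≥0∞) (h : X ≠ ⊤) : (X : EReal) = ((X.toReal : ℝ) : EReal) := by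
  conv_lhs => rw [← ENNReal.ofReal_toReal h]
  rw [EReal.coe_ennreal_ofReal, max_eq_left ENNReal.toReal_nonneg]

lemma max_zero_sub_max_neg (a : ℝ) : max a 0 - max (-a) 0 = a := by
  rcases le_total a 0 with h | h
  · rw [max_eq_right h, max_eq_left (neg_nonneg.mpr h)]; ring
  · rw [max_eq_left h, max_eq_right (neg_nonpos.mpr h)]; ring

lemma ofReal_max_zero (x : ℝ) : ENNReal.ofReal (max x 0) = ENNReal.ofReal x := by
  rcases le_total x 0 with h | h
  · simp [max_eq_right h, ENNReal.ofReal_eq_zero.mpr h]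
  · rw [max_eq_left h]

lemma mul_neglog_le_one {d : ℝ≥0∞} (hd : d ≠ ⊤) : d * erealPos (-(elog d)) ≤ 1 := by
  rcases eq_or_ne d 0 with rfl | hd0
  · simp
  · have hdp : 0 < d.toReal := ENNReal.toReal_pos hd0 hd
    rw [elog, if_neg hd0, if_neg hd, ← EReal.coe_neg, erealPos_coe]
    nth_rewrite 1 [← ENNReal.ofReal_toReal hd]
    rw [← ENNReal.ofReal_mul ENNReal.toReal_nonneg,
      show (1 : ℝ≥0∞) = ENNReal.ofReal 1 by simp]
    apply ENNReal.ofReal_le_ofReal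
    have h := Real.log_le_sub_one_of_pos (inv_pos.mpr hdp)
    rw [Real.log_inv] at h
    nlinarith [mul_le_mul_of_nonneg_left h hdp.le, mul_inv_cancel₀ hdp.ne']

lemma pos_elog_le {d : ℝ≥0∞} (e : ℝ≥0∞) (hd0 : d ≠ 0) (hdt : d ≠ ⊤) :
    erealPos (elog e) ≤ erealPos (elog d) + e / d := by
  rcases eq_or_ne e 0 with rfl | he0
  · simp [elog, erealPos]
  rcases eq_or_ne e ⊤ with rfl | het
  · rw [ENNReal.top_div_of_ne_top hdt]; simp
  · have hdp : 0 < d.toReal := ENNReal.toReal_pos hd0 hdt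
    have hep : 0 < e.toReal := ENNReal.toReal_pos he0 het
    rw [elog, if_neg he0, if_neg het, elog, if_neg hd0, if_neg hdt, erealPos_coe, erealPos_coe]
    have hdiv : e / d = ENNReal.ofReal (e.toReal / d.toReal) := by
      have hne : e / d ≠ ⊤ := by simp [ENNReal.div_eq_top, he0, hd0, het, hdt]
      rw [← ENNReal.ofReal_toReal hne, ENNReal.toReal_div]
    rw [hdiv]
    calc ENNReal.ofReal (Real.log e.toReal)
        ≤ ENNReal.ofReal (Real.log d.toReal + e.toReal / d.toReal) := by
          apply ENNReal.ofReal_le_ofReal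
          have h1 := Real.log_le_sub_one_of_pos (div_pos hep hdp)
          rw [Real.log_div hep.ne' hdp.ne'] at h1
          have : 0 < e.toReal / d.toReal := div_pos hep hdp
          linarith
      _ ≤ ENNReal.ofReal (Real.log d.toReal) + ENNReal.ofReal (e.toReal / d.toReal) :=
          ENNReal.ofReal_add_le

lemma key_pointwise {d : ℝ≥0∞} (e : ℝ≥0∞) (hd0 : d ≠ 0) (hdt : d ≠ ⊤) :
    erealPos (elog e) + erealPos (-(elog d)) + 1 ≤
      erealPos (elog d) + erealPos (-(elog e)) + e / d := by
  rcases eq_or_ne e 0 with rfl | he0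
  · have : erealPos (-(elog (0 : ℝ≥0∞))) = ⊤ := by simp [elog, erealPos]
    rw [this]; simp
  rcases eq_or_ne e ⊤ with rfl | het
  · rw [ENNReal.top_div_of_ne_top hdt]; simp
  · have hdp : 0 < d.toReal := ENNReal.toReal_pos hd0 hdt
    have hep : 0 < e.toReal := ENNReal.toReal_pos he0 het
    rw [elog, if_neg he0, if_neg het, elog, if_neg hd0, if_neg hdt]
    rw [← EReal.coe_neg, ← EReal.coe_neg, erealPos_coe, erealPos_coe, erealPos_coe, erealPos_coe]
    have hdiv : e / d = ENNReal.ofReal (e.toReal / d.toReal) := by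
      have hne : e / d ≠ ⊤ := by simp [ENNReal.div_eq_top, he0, hd0, het, hdt]
      rw [← ENNReal.ofReal_toReal hne, ENNReal.toReal_div]
    set a := Real.log e.toReal
    set b := Real.log d.toReal
    set c := e.toReal / d.toReal with hc
    have hcpos : 0 < c := div_pos hep hdp
    have hab : a - b ≤ c - 1 := by
      have h1 := Real.log_le_sub_one_of_pos hcpos
      rw [hc, Real.log_div hep.ne' hdp.ne'] at h1
      linarith
    rw [hdiv]
    calc ENNReal.ofReal a + ENNReal.ofReal (-b) + 1
        = ENNReal.ofReal (max a 0 + max (-b) 0 + 1) := by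
          rw [ENNReal.ofReal_add (by positivity) zero_le_one,
            ENNReal.ofReal_add (le_max_right a 0) (le_max_right (-b) 0),
            ofReal_max_zero, ofReal_max_zero, ENNReal.ofReal_one]
      _ ≤ ENNReal.ofReal (max b 0 + max (-a) 0 + c) := by
          apply ENNReal.ofReal_le_ofReal
          have h1 := max_zero_sub_max_neg a
          have h2 := max_zero_sub_max_neg b
          linarith
      _ ≤ ENNReal.ofReal (max b 0 + max (-a) 0) + ENNReal.ofReal c := ENNReal.ofReal_add_le
      _ ≤ ENNReal.ofReal (max b 0) + ENNReal.ofReal (max (-a) 0) + ENNReal.ofReal c :=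
          add_le_add_left ENNReal.ofReal_add_le _
      _ = ENNReal.ofReal b + ENNReal.ofReal (-a) + ENNReal.ofReal c := by
          rw [ofReal_max_zero, ofReal_max_zero]

end RaoBlackwellAux

/-- If some element `P'` of the effective null (a nonnegative measure giving every e-variable
expectation at most one) satisfies `D_KL(P_θ ∥ P') < ∞`, `P' ≪ P_θ` and `P_θ ≪ P'`, then for
every e-variable `E` for the null, `E_θ[log E]` is well-defined and
`-∞ ≤ E_θ[log E] ≤ D_KL(P_θ ∥ P') < ∞`. -/
theorem rao_blackwell_stmt5
    {Ω Θ : Type*} {mΩ : MeasurableSpace Ω} (P : Θ → Measure Ω)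
    [∀ θ', IsProbabilityMeasure (P θ')]
    (Θ₀ : Set Θ) (θ : Θ)
    (P' : Measure Ω)
    -- `P'` belongs to the effective null hypothesis
    (heff : ∀ E : Ω → ℝ≥0∞, Measurable[mΩ] E → (∀ θ₀ ∈ Θ₀, ∫⁻ ω, E ω ∂(P θ₀) ≤ 1) →
      ∫⁻ ω, E ω ∂P' ≤ 1)
    (hac : P' ≪ P θ) (hac' : P θ ≪ P')
    (hKL : klDiv' (P θ) P' < ⊤) :
    ∀ E : Ω → ℝ≥0∞, Measurable[mΩ] E → (∀ θ₀ ∈ Θ₀, ∫⁻ ω, E ω ∂(P θ₀) ≤ 1) →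
      ExpDefined (P θ) (fun ω => elog (E ω)) ∧
      eexp (P θ) (fun ω => elog (E ω)) ≤ klDiv' (P θ) P' := by
  intro E hE hE1
  have hP'univ : P' Set.univ ≤ 1 := by
    have := heff (fun _ => 1) measurable_const (fun θ₀ _ => by simp)
    simpa using this
  haveI : IsFiniteMeasure P' := ⟨lt_of_le_of_lt hP'univ ENNReal.one_lt_top⟩
  set D : Ω → ℝ≥0∞ := (P θ).rnDeriv P' with hDdef
  have hDm : Measurable D := Measure.measurable_rnDeriv _ _
  have hPθ : P'.withDensity D = P θ := Measure.withDensity_rnDeriv_eq _ _ hac'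
  have hDpos : ∀ᵐ ω ∂(P θ), 0 < D ω := Measure.rnDeriv_pos hac'
  have hDlt : ∀ᵐ ω ∂(P θ), D ω < ⊤ := hac'.ae_le (Measure.rnDeriv_lt_top _ _)
  have hfE : Measurable fun ω => erealPos (elog (E ω)) :=
    measurable_erealPos.comp (measurable_elog.comp hE)
  have hgE : Measurable fun ω => erealPos (-(elog (E ω))) :=
    measurable_erealPos.comp (measurable_elog.comp hE).neg
  have hfD : Measurable fun ω => erealPos (elog (D ω)) :=
    measurable_erealPos.comp (measurable_elog.comp hDm)
  have hgD : Measurable fun ω => erealPos (-(elog (D ω))) :=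
    measurable_erealPos.comp (measurable_elog.comp hDm).neg
  set A := ∫⁻ ω, erealPos (elog (D ω)) ∂(P θ) with hAdef
  set B := ∫⁻ ω, erealPos (-(elog (D ω))) ∂(P θ) with hBdef
  set Pp := ∫⁻ ω, erealPos (elog (E ω)) ∂(P θ) with hPpdef
  set N := ∫⁻ ω, erealPos (-(elog (E ω))) ∂(P θ) with hNdef
  have hKLeq : klDiv' (P θ) P' = (A : EReal) - (B : EReal) := by
    rw [klDiv', if_pos hac']; rfl
  -- B ≤ 1
  have hB : B ≤ 1 := by
    have hBeq : B = ∫⁻ ω, D ω * erealPos (-(elog (D ω))) ∂P' := by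
      rw [hBdef]
      conv_lhs => rw [← hPθ]
      rw [lintegral_withDensity_eq_lintegral_mul _ hDm hgD]
      rfl
    rw [hBeq]
    calc ∫⁻ ω, D ω * erealPos (-(elog (D ω))) ∂P' ≤ ∫⁻ _, 1 ∂P' := by
          refine lintegral_mono_ae ?_
          filter_upwards [Measure.rnDeriv_lt_top (P θ) P'] with ω hω
          exact mul_neglog_le_one hω.ne
      _ = P' Set.univ := lintegral_one
      _ ≤ 1 := hP'univ
  have hBne : B ≠ ⊤ := (lt_of_le_of_lt hB ENNReal.one_lt_top).ne
  -- A < ⊤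
  have hA : A ≠ ⊤ := by
    intro h
    rw [hKLeq, h, EReal.coe_ennreal_top, ennreal_coe_ereal_eq B hBne,
      EReal.top_sub_coe] at hKL
    exact lt_irrefl _ hKL
  -- ∫ E/D dPθ ≤ 1
  have hEDm : Measurable fun ω => E ω / D ω := hE.div hDm
  have hED : ∫⁻ ω, E ω / D ω ∂(P θ) ≤ 1 := by
    conv_lhs => rw [← hPθ]
    rw [lintegral_withDensity_eq_lintegral_mul _ hDm hEDm]
    calc ∫⁻ ω, (D * fun ω => E ω / D ω) ω ∂P' ≤ ∫⁻ ω, E ω ∂P' :=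
          lintegral_mono fun ω => ENNReal.mul_div_le
      _ ≤ 1 := heff E hE hE1
  -- Pp < ⊤
  have hPp : Pp < ⊤ := by
    have h1 : Pp ≤ A + ∫⁻ ω, E ω / D ω ∂(P θ) := by
      rw [hPpdef, hAdef, ← lintegral_add_left hfD]
      refine lintegral_mono_ae ?_
      filter_upwards [hDpos, hDlt] with ω h1 h2
      exact pos_elog_le (E ω) h1.ne' h2.ne
    refine lt_of_le_of_lt (h1.trans (add_le_add_right hED A)) ?_
    exact ENNReal.add_lt_top.mpr ⟨hA.lt_top, ENNReal.one_lt_top⟩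
  -- main integral inequality
  have hmain : Pp + B ≤ A + N := by
    have hmono : ∫⁻ ω, (erealPos (elog (E ω)) + erealPos (-(elog (D ω))) + 1) ∂(P θ) ≤
        ∫⁻ ω, (erealPos (elog (D ω)) + erealPos (-(elog (E ω))) + E ω / D ω) ∂(P θ) := by
      refine lintegral_mono_ae ?_
      filter_upwards [hDpos, hDlt] with ω h1 h2
      exact key_pointwise (E ω) h1.ne' h2.ne
    have l1 : ∫⁻ ω, (erealPos (elog (E ω)) + erealPos (-(elog (D ω))) + 1) ∂(P θ)
        = Pp + B + 1 := by
      rw [lintegral_add_right _ measurable_const, lintegral_add_right _ hgD, lintegral_one,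
        measure_univ]
    have l2 : ∫⁻ ω, (erealPos (elog (D ω)) + erealPos (-(elog (E ω))) + E ω / D ω) ∂(P θ)
        = A + N + ∫⁻ ω, E ω / D ω ∂(P θ) := by
      rw [lintegral_add_right _ hEDm, lintegral_add_right _ hgE]
    rw [l1, l2] at hmono
    have : Pp + B + 1 ≤ A + N + 1 :=
      hmono.trans (add_le_add_right hED _)
    exact (ENNReal.add_le_add_iff_right ENNReal.one_ne_top).mp this
  constructor
  · exact Or.inl hPp
  · rw [hKLeq]
    show (Pp : EReal) - (N : EReal) ≤ (A : EReal) - (B : EReal)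
    rcases eq_or_ne N ⊤ with hN | hN
    · rw [hN, EReal.coe_ennreal_top, EReal.sub_top]
      exact bot_le
    · have hreal : Pp.toReal + B.toReal ≤ A.toReal + N.toReal := by
        have h1 : (Pp + B).toReal ≤ (A + N).toReal := by
          refine ENNReal.toReal_mono ?_ hmain
          exact ENNReal.add_ne_top.mpr ⟨hA, hN⟩
        rwa [ENNReal.toReal_add hPp.ne hBne, ENNReal.toReal_add hA hN] at h1
      rw [ennreal_coe_ereal_eq Pp hPp.ne, ennreal_coe_ereal_eq N hN,
        ennreal_coe_ereal_eq A hA, ennreal_coe_ereal_eq B hBne,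
        ← EReal.coe_sub, ← EReal.coe_sub, EReal.coe_le_coe_iff]
      linarith
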